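/- Let r,s be finite with 2 ≤ r,s < ∞, and suppose O(r)∘K(s) = Q₁∘Q₂ for graph properties Q₁ and Q₂. Then, as an unordered pair, {Q₁,Q₂} = {O(r),K(s)}. -/

import Mathlib

attribute [local instance] Classical.propDecidable

open SimpleGraph

/-- A finite simple graph, bundled. -/
structure FGraph : Type 1 where
  V : Type
  [fin : Fintype V]
  graph : SimpleGraph V

attribute [instance] FGraph.fin

namespace FGraph

/-- `G.IsInduced H` : `G` is isomorphic to an induced subgraph of `H`. -/
def IsInduced (G H : FGraph) : Prop := Nonempty (G.graph ↪g H.graph)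

/-- `G.IsSub H` : `G` is isomorphic to a subgraph of `H`. -/
def IsSub (G H : FGraph) : Prop := ∃ f : G.graph →g H.graph, Function.Injective f

/-- `G.Iso H` : `G` and `H` are isomorphic. -/
def Iso (G H : FGraph) : Prop := Nonempty (G.graph ≃g H.graph)

/-- The induced subgraph of `G` on a set `s` of vertices. -/
noncomputable def induce (G : FGraph) (s : Set G.V) : FGraph := ⟨↥s, G.graph.induce s⟩

end FGraph

/-- A class of finite graphs. -/
abbrev GProp : Type 1 := FGraph → Prop

/-- A graph property: a nonempty isomorphism-closed class of finite graphs,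
each having at least one vertex. -/
structure IsGProp (P : GProp) : Prop where
  nonempty : ∃ G, P G
  vertexNonempty : ∀ G, P G → Nonempty G.V
  isoClosed : ∀ G H, G.Iso H → P G → P H

namespace GProp

/-- The product `P ∘ Q` of two classes of graphs. -/
def prod (P Q : GProp) : GProp := fun G =>
  Nonempty G.V ∧ ∃ s : Set G.V,
    (s.Nonempty → P (G.induce s)) ∧ ((sᶜ : Set G.V).Nonempty → Q (G.induce (sᶜ : Set G.V)))

/-- The product `∏ i, Ps i` of an indexed family of classes of graphs:
the vertex set is partitioned into the (possibly empty) preimages of a map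
to the index set, and every nonempty part must induce a graph in the
corresponding class. -/
def iProd {I : Type*} (Ps : I → GProp) : GProp := fun G =>
  Nonempty G.V ∧ ∃ f : G.V → I,
    ∀ i, (f ⁻¹' {i}).Nonempty → Ps i (G.induce (f ⁻¹' {i}))

end GProp

/-- Closed under induced subgraphs with at least one vertex. -/
def IndHereditary (P : GProp) : Prop :=
  ∀ G H : FGraph, P G → H.IsInduced G → Nonempty H.V → P H

/-- Closed under subgraphs with at least one vertex. -/
def Hereditary (P : GProp) : Prop :=
  ∀ G H : FGraph, P G → H.IsSub G → Nonempty H.V → P H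

/-- Closed under induced supergraphs. -/
def GeqHereditary (P : GProp) : Prop :=
  ∀ G H : FGraph, P H → H.IsInduced G → P G


/-- `O(r)`: edgeless graphs on at least one and at most `r` vertices. -/
def Oprop (r : ℕ∞) : GProp := fun G =>
  Nonempty G.V ∧ G.graph = ⊥ ∧ (Fintype.card G.V : ℕ∞) ≤ r

/-- `K(s)`: complete graphs on at least one and at most `s` vertices. -/
def Kprop (s : ℕ∞) : GProp := fun G =>
  Nonempty G.V ∧ G.graph = ⊤ ∧ (Fintype.card G.V : ℕ∞) ≤ s

section Aux

variable {V₁ V₂ : Type}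

/-- Overlay of two graphs on a sum type, with cross edges given by `c`. -/
def overlay (G₁ : SimpleGraph V₁) (G₂ : SimpleGraph V₂) (c : V₁ → V₂ → Prop) :
    SimpleGraph (V₁ ⊕ V₂) where
  Adj x y := match x, y with
    | .inl a, .inl b => G₁.Adj a b
    | .inr a, .inr b => G₂.Adj a b
    | .inl a, .inr b => c a b
    | .inr a, .inl b => c b a
  symm := ⟨by rintro (a|a) (b|b) h <;> first | exact G₁.adj_symm h | exact G₂.adj_symm h | exact h⟩
  loopless := ⟨by
    rintro (a|a) h
    · exact G₁.loopless.irrefl a h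
    · exact G₂.loopless.irrefl a h⟩

@[simp] lemma overlay_adj_inl_inl {G₁ : SimpleGraph V₁} {G₂ : SimpleGraph V₂}
    {c : V₁ → V₂ → Prop} {a b : V₁} :
    (overlay G₁ G₂ c).Adj (.inl a) (.inl b) ↔ G₁.Adj a b := Iff.rfl
@[simp] lemma overlay_adj_inr_inr {G₁ : SimpleGraph V₁} {G₂ : SimpleGraph V₂}
    {c : V₁ → V₂ → Prop} {a b : V₂} :
    (overlay G₁ G₂ c).Adj (.inr a) (.inr b) ↔ G₂.Adj a b := Iff.rfl
@[simp] lemma overlay_adj_inl_inr {G₁ : SimpleGraph V₁} {G₂ : SimpleGraph V₂}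
    {c : V₁ → V₂ → Prop} {a : V₁} {b : V₂} :
    (overlay G₁ G₂ c).Adj (.inl a) (.inr b) ↔ c a b := Iff.rfl
@[simp] lemma overlay_adj_inr_inl {G₁ : SimpleGraph V₁} {G₂ : SimpleGraph V₂}
    {c : V₁ → V₂ → Prop} {a : V₂} {b : V₁} :
    (overlay G₁ G₂ c).Adj (.inr a) (.inl b) ↔ c b a := Iff.rfl

/-- Overlay of two bundled finite graphs. -/
noncomputable abbrev fov (G H : FGraph) (c : G.V → H.V → Prop) : FGraph :=
  ⟨G.V ⊕ H.V, overlay G.graph H.graph c⟩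

attribute [reducible] FGraph.induce

@[simp] lemma fov_graph {G H : FGraph} {c : G.V → H.V → Prop} :
    (fov G H c).graph = overlay G.graph H.graph c := rfl

lemma card_set_add_card_compl {V : Type} [Fintype V] (S : Set V) :
    Fintype.card ↥S + Fintype.card ↥(Sᶜ) = Fintype.card V := by
  classical
  rw [← Fintype.card_sum]
  exact Fintype.card_congr (Equiv.sumCompl (· ∈ S))

lemma cardLE {α : Type} {k : ℕ} {i1 : Fintype α} (i2 : Fintype α)
    (h : @Fintype.card α i1 ≤ k) : @Fintype.card α i2 ≤ k := by
  rwa [Subsingleton.elim i2 i1]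

lemma cardGE {α : Type} {k : ℕ} {i1 : Fintype α} (i2 : Fintype α)
    (h : k ≤ @Fintype.card α i1) : k ≤ @Fintype.card α i2 := by
  rwa [Subsingleton.elim i2 i1]

lemma cardEQ {α : Type} {k : ℕ} {i1 : Fintype α} (i2 : Fintype α)
    (h : @Fintype.card α i1 = k) : @Fintype.card α i2 = k := by
  rwa [Subsingleton.elim i2 i1]

lemma no_adj_of_O {rr : ℕ∞} {X : FGraph} {S : Set X.V}
    (hO : Oprop rr (X.induce S)) {x y : X.V} (hx : x ∈ S) (hy : y ∈ S)
    (hadj : X.graph.Adj x y) : False := by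
  have hb : X.graph.induce S = ⊥ := hO.2.1
  have h2 : (X.graph.induce S).Adj ⟨x, hx⟩ ⟨y, hy⟩ := by simpa using hadj
  rw [hb] at h2
  simpa using h2

lemma adj_of_K {ss : ℕ∞} {X : FGraph} {T : Set X.V}
    (hK : Kprop ss (X.induce T)) {x y : X.V} (hx : x ∈ T) (hy : y ∈ T)
    (hne : x ≠ y) : X.graph.Adj x y := by
  have hb : X.graph.induce T = ⊤ := hK.2.1
  have h2 : (X.graph.induce T).Adj ⟨x, hx⟩ ⟨y, hy⟩ := by
    rw [hb]
    simp only [SimpleGraph.top_adj, ne_eq, Subtype.mk.injEq]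
    exact hne
  simpa using h2

lemma card_le_of_O {rr : ℕ} {X : FGraph} {S : Set X.V}
    (hO : Oprop (rr : ℕ∞) (X.induce S)) : Fintype.card ↥S ≤ rr := by
  have h2 : ((Fintype.card ↥S : ℕ) : ℕ∞) ≤ (rr : ℕ∞) := hO.2.2
  exact_mod_cast h2

lemma card_le_of_K {ss : ℕ} {X : FGraph} {T : Set X.V}
    (hK : Kprop (ss : ℕ∞) (X.induce T)) : Fintype.card ↥T ≤ ss := by
  have h2 : ((Fintype.card ↥T : ℕ) : ℕ∞) ≤ (ss : ℕ∞) := hK.2.2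
  exact_mod_cast h2

lemma induce_bot_of {X : FGraph} {S : Set X.V}
    (h : ∀ x ∈ S, ∀ y ∈ S, ¬ X.graph.Adj x y) : X.graph.induce S = ⊥ := by
  ext ⟨x, hx⟩ ⟨y, hy⟩
  simp only [SimpleGraph.comap_adj, Function.Embedding.coe_subtype,
    SimpleGraph.bot_adj, iff_false]
  exact h x hx y hy

lemma induce_top_of {X : FGraph} {S : Set X.V}
    (h : ∀ x ∈ S, ∀ y ∈ S, x ≠ y → X.graph.Adj x y) : X.graph.induce S = ⊤ := by
  ext ⟨x, hx⟩ ⟨y, hy⟩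
  simp only [SimpleGraph.comap_adj, Function.Embedding.coe_subtype,
    SimpleGraph.top_adj, ne_eq, Subtype.mk.injEq]
  constructor
  · intro ha heq; exact X.graph.loopless.irrefl x (heq ▸ ha)
  · exact h x hx y hy

lemma fiso_of_bot (G H : FGraph) (hG : G.graph = ⊥) (hH : H.graph = ⊥)
    (hc : Fintype.card G.V = Fintype.card H.V) : G.Iso H :=
  ⟨{ toEquiv := Fintype.equivOfCardEq hc,
     map_rel_iff' := by intro a b; rw [hG, hH]; simp }⟩

lemma fiso_of_top (G H : FGraph) (hG : G.graph = ⊤) (hH : H.graph = ⊤)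
    (hc : Fintype.card G.V = Fintype.card H.V) : G.Iso H :=
  ⟨{ toEquiv := Fintype.equivOfCardEq hc,
     map_rel_iff' := by
       intro a b; rw [hG, hH]
       simp [Ne, Equiv.apply_eq_iff_eq] }⟩

lemma mem_of_bot_card {Q : GProp} (hQ : IsGProp Q) {G : FGraph} (hGQ : Q G)
    (hGbot : G.graph = ⊥) (H : FGraph) (hHbot : H.graph = ⊥)
    (hc : Fintype.card G.V = Fintype.card H.V) : Q H :=
  hQ.isoClosed _ _ (fiso_of_bot G H hGbot hHbot hc) hGQ

lemma mem_of_top_card {Q : GProp} (hQ : IsGProp Q) {G : FGraph} (hGQ : Q G)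
    (hGtop : G.graph = ⊤) (H : FGraph) (hHtop : H.graph = ⊤)
    (hc : Fintype.card G.V = Fintype.card H.V) : Q H :=
  hQ.isoClosed _ _ (fiso_of_top G H hGtop hHtop hc) hGQ

lemma bot_eq_top_of_card_le_one {V : Type} [Fintype V] (h : Fintype.card V ≤ 1) :
    (⊥ : SimpleGraph V) = ⊤ := by
  have hs := Fintype.card_le_one_iff.mp h
  ext a b
  simp [hs a b]

lemma prod_swap {Q₁ Q₂ : GProp} {X : FGraph} (h : GProp.prod Q₁ Q₂ X) :
    GProp.prod Q₂ Q₁ X := by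
  obtain ⟨hne, S, h1, h2⟩ := h
  exact ⟨hne, Sᶜ, h2, by simpa [compl_compl] using h1⟩

lemma prod_comm' (Q₁ Q₂ : GProp) : GProp.prod Q₁ Q₂ = GProp.prod Q₂ Q₁ := by
  funext X
  exact propext ⟨prod_swap, prod_swap⟩

lemma combo {Q₁ Q₂ : GProp} (hQ₁ : IsGProp Q₁) (hQ₂ : IsGProp Q₂) {G H : FGraph}
    (h1 : Q₁ G) (h2 : Q₂ H) (c : G.V → H.V → Prop) :
    GProp.prod Q₁ Q₂ (fov G H c) := by
  obtain ⟨x⟩ := hQ₁.vertexNonempty _ h1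
  refine ⟨⟨Sum.inl x⟩, (Set.range Sum.inl : Set (G.V ⊕ H.V)), fun _ => ?_, fun _ => ?_⟩
  · refine hQ₁.isoClosed _ _ ⟨?_⟩ h1
    exact { toEquiv := Equiv.ofInjective Sum.inl Sum.inl_injective
            map_rel_iff' := by intro a b; simp [FGraph.induce, Equiv.ofInjective_apply] }
  · have hc : (Set.range (Sum.inl : G.V → G.V ⊕ H.V))ᶜ = Set.range Sum.inr :=
      Set.compl_range_inl
    have hc' : ((Set.range Sum.inl)ᶜ : Set (fov G H c).V) = Set.range Sum.inr := hc
    rw [hc']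
    refine hQ₂.isoClosed _ _ ⟨?_⟩ h2
    exact { toEquiv := Equiv.ofInjective Sum.inr Sum.inr_injective
            map_rel_iff' := by intro a b; simp [FGraph.induce, Equiv.ofInjective_apply] }

end Aux
section AuxB

lemma card_le_of_inj_to_fin {V : Type} [Fintype V] (S : Set V) (k : ℕ) (f : V → Fin k)
    (hf : ∀ x ∈ S, ∀ y ∈ S, f x = f y → x = y) : Fintype.card ↥S ≤ k := by
  classical
  have := Fintype.card_le_of_injective (fun x : ↥S => f x.1)
    (fun a b hab => Subtype.ext (hf _ a.2 _ b.2 hab))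
  simpa using this

lemma le_card_of_fin_inj {V : Type} [Fintype V] (S : Set V) (k : ℕ) (f : Fin k → V)
    (hmem : ∀ i, f i ∈ S) (hinj : Function.Injective f) : k ≤ Fintype.card ↥S := by
  classical
  have := Fintype.card_le_of_injective (fun i => (⟨f i, hmem i⟩ : ↥S))
    (fun a b hab => hinj (by simpa [Subtype.ext_iff] using hab))
  simpa using this

lemma exists_pair_set {V : Type} [Fintype V] {S : Set V} (h : 2 ≤ Fintype.card ↥S) :
    ∃ x ∈ S, ∃ y ∈ S, x ≠ y := by
  obtain ⟨a, b, hab⟩ := Fintype.exists_pair_of_one_lt_card (α := ↥S) (by omega)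
  exact ⟨a.1, a.2, b.1, b.2, fun hv => hab (Subtype.ext hv)⟩

lemma three_le_card {α : Type*} [Fintype α] (a b c : α) (hab : a ≠ b) (hac : a ≠ c)
    (hbc : b ≠ c) : 3 ≤ Fintype.card α := by
  classical
  have h3 : ({a, b, c} : Finset α).card = 3 := by
    rw [Finset.card_insert_of_notMem (by simp [hab, hac]),
      Finset.card_insert_of_notMem (by simp [hbc]), Finset.card_singleton]
  calc 3 = ({a, b, c} : Finset α).card := h3.symm
    _ ≤ (Finset.univ : Finset α).card := Finset.card_le_univ _
    _ = Fintype.card α := Finset.card_univ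

lemma Oprop_mk {rr : ℕ} {X : FGraph} {S : Set X.V} (hne : S.Nonempty)
    (hadj : ∀ x ∈ S, ∀ y ∈ S, ¬X.graph.Adj x y) (hcard : Fintype.card ↥S ≤ rr) :
    Oprop (rr : ℕ∞) (X.induce S) :=
  ⟨hne.to_subtype, induce_bot_of hadj, Nat.cast_le.mpr hcard⟩

lemma Kprop_mk {ss : ℕ} {X : FGraph} {S : Set X.V} (hne : S.Nonempty)
    (hadj : ∀ x ∈ S, ∀ y ∈ S, x ≠ y → X.graph.Adj x y) (hcard : Fintype.card ↥S ≤ ss) :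
    Kprop (ss : ℕ∞) (X.induce S) :=
  ⟨hne.to_subtype, induce_top_of hadj, Nat.cast_le.mpr hcard⟩

/-- Edgeless graph on `n` vertices. -/
abbrev Eg (n : ℕ) : FGraph := ⟨Fin n, ⊥⟩
/-- Complete graph on `n` vertices. -/
abbrev Kg (n : ℕ) : FGraph := ⟨Fin n, ⊤⟩
/-- Disjoint union of edgeless graph on `p` and complete graph on `q` vertices. -/
abbrev EKg (p q : ℕ) : FGraph := ⟨Fin p ⊕ Fin q, overlay ⊥ ⊤ (fun _ _ => False)⟩
/-- Join of complete graph on `m` and edgeless graph on `n` vertices. -/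
abbrev KEg (m n : ℕ) : FGraph := ⟨Fin m ⊕ Fin n, overlay ⊤ ⊥ (fun _ _ => True)⟩

variable {r s : ℕ}

lemma memP_E (hr : 1 ≤ r) (hs : 1 ≤ s) (n : ℕ) (h1 : 1 ≤ n) (hn : n ≤ r + 1) :
    GProp.prod (Oprop (r : ℕ∞)) (Kprop (s : ℕ∞)) (Eg n) := by
  have hEsub : ∀ x : Fin n, x ∈ ({x : Fin n | (x : ℕ) < r}ᶜ : Set (Fin n)) → (x : ℕ) = r := by
    intro x hx
    have h2 : ¬ (x : ℕ) < r := hx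
    have := x.isLt
    omega
  refine ⟨⟨⟨0, h1⟩⟩, {x : Fin n | (x : ℕ) < r}, fun hne => ?_, fun hne => ?_⟩
  · refine Oprop_mk hne (fun x hx y hy hadj => ?_) ?_
    · simpa [Eg] using hadj
    · exact card_le_of_inj_to_fin _ r (fun x => if h : (x : ℕ) < r then ⟨x, h⟩ else ⟨0, hr⟩)
        (fun x hx y hy hxy => by
          simp only [Set.mem_setOf_eq] at hx hy
          simp only [dif_pos hx, dif_pos hy] at hxy
          exact Fin.ext (by simpa [Fin.ext_iff] using hxy))
  · refine Kprop_mk hne (fun x hx y hy hxy => absurd (Fin.ext ?_) hxy) ?_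
    · rw [hEsub x hx, hEsub y hy]
    · refine le_trans (card_le_of_inj_to_fin _ 1 (fun _ => 0) ?_) hs
      intro x hx y hy _
      exact Fin.ext (by rw [hEsub x hx, hEsub y hy])

lemma memP_K (hr : 1 ≤ r) (hs : 1 ≤ s) (n : ℕ) (h1 : 1 ≤ n) (hn : n ≤ s + 1) :
    GProp.prod (Oprop (r : ℕ∞)) (Kprop (s : ℕ∞)) (Kg n) := by
  have hEsub : ∀ x : Fin n, x ∈ ({x : Fin n | s ≤ (x : ℕ)} : Set (Fin n)) → (x : ℕ) = s := by
    intro x hx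
    have h2 : s ≤ (x : ℕ) := hx
    have := x.isLt
    omega
  refine ⟨⟨⟨0, h1⟩⟩, {x : Fin n | s ≤ (x : ℕ)}, fun hne => ?_, fun hne => ?_⟩
  · refine Oprop_mk hne (fun x hx y hy hadj => ?_) ?_
    · have : x = y := Fin.ext (by rw [hEsub x hx, hEsub y hy])
      exact (Kg n).graph.loopless.irrefl x (this ▸ hadj)
    · refine le_trans (card_le_of_inj_to_fin _ 1 (fun _ => 0) ?_) hr
      intro x hx y hy _
      exact Fin.ext (by rw [hEsub x hx, hEsub y hy])
  · refine Kprop_mk hne (fun x hx y hy hxy => ?_) ?_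
    · exact hxy
    · refine card_le_of_inj_to_fin _ s (fun x => if h : (x : ℕ) < s then ⟨x, h⟩ else ⟨0, hs⟩)
        (fun x hx y hy hxy => ?_)
      have hx' : (x : ℕ) < s := by
        have h2 : ¬ s ≤ (x : ℕ) := hx
        omega
      have hy' : (y : ℕ) < s := by
        have h2 : ¬ s ≤ (y : ℕ) := hy
        omega
      simp only [dif_pos hx', dif_pos hy'] at hxy
      exact Fin.ext (by simpa [Fin.ext_iff] using hxy)

end AuxB
section AuxC

variable {r s : ℕ}

lemma of_not_mem_range_inl {α β : Type} {x : α ⊕ β} (hx : x ∉ Set.range Sum.inl) :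
    ∃ b, x = Sum.inr b := by
  cases x with
  | inl a => exact absurd ⟨a, rfl⟩ hx
  | inr b => exact ⟨b, rfl⟩

lemma memP_EK (p q : ℕ) (hp1 : 1 ≤ p) (hp : p ≤ r) (hq1 : 1 ≤ q) (hq : q ≤ s) :
    GProp.prod (Oprop (r : ℕ∞)) (Kprop (s : ℕ∞)) (EKg p q) := by
  refine ⟨⟨Sum.inl ⟨0, hp1⟩⟩, Set.range Sum.inl, fun hne => ?_, fun hne => ?_⟩
  · refine Oprop_mk hne (fun x hx y hy hadj => ?_) ?_
    · obtain ⟨a, rfl⟩ := hx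
      obtain ⟨b, rfl⟩ := hy
      simpa [EKg] using hadj
    · refine card_le_of_inj_to_fin _ r
        (Sum.elim (fun a => ⟨a.1, by omega⟩) (fun _ => ⟨0, by omega⟩)) ?_
      rintro x ⟨a, rfl⟩ y ⟨b, rfl⟩ hf
      simp only [Sum.elim_inl, Fin.mk.injEq] at hf
      exact congrArg Sum.inl (Fin.ext hf)
  · refine Kprop_mk hne (fun x hx y hy hxy => ?_) ?_
    · obtain ⟨b, rfl⟩ := of_not_mem_range_inl hx
      obtain ⟨b', rfl⟩ := of_not_mem_range_inl hy
      have : b ≠ b' := fun hbb => hxy (by rw [hbb])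
      simpa [EKg] using this
    · refine card_le_of_inj_to_fin _ s
        (Sum.elim (fun _ => ⟨0, by omega⟩) (fun b => ⟨b.1, by omega⟩)) ?_
      intro x hx y hy hf
      obtain ⟨b, rfl⟩ := of_not_mem_range_inl hx
      obtain ⟨b', rfl⟩ := of_not_mem_range_inl hy
      simp only [Sum.elim_inr, Fin.mk.injEq] at hf
      exact congrArg Sum.inr (Fin.ext hf)

lemma memP_EK' (p : ℕ) (hp1 : 1 ≤ p) (hp : p + 1 ≤ r) (hs1 : 1 ≤ s) :
    GProp.prod (Oprop (r : ℕ∞)) (Kprop (s : ℕ∞)) (EKg p (s + 1)) := by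
  set z0 : Fin (s + 1) := ⟨0, by omega⟩ with hz0
  refine ⟨⟨Sum.inl ⟨0, hp1⟩⟩,
    Set.range Sum.inl ∪ {Sum.inr z0}, fun hne => ?_, fun hne => ?_⟩
  · refine Oprop_mk hne (fun x hx y hy hadj => ?_) ?_
    · rcases hx with ⟨a, rfl⟩ | hx
      · rcases hy with ⟨b, rfl⟩ | hy
        · simpa [EKg] using hadj
        · have : y = Sum.inr z0 := hy
          subst this
          simpa [EKg] using hadj
      · have hx' : x = Sum.inr z0 := hx
        subst hx'
        rcases hy with ⟨b, rfl⟩ | hy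
        · simpa [EKg] using hadj
        · have : y = Sum.inr z0 := hy
          subst this
          exact (EKg p (s + 1)).graph.loopless.irrefl _ hadj
    · refine card_le_of_inj_to_fin _ r
        (Sum.elim (fun a => ⟨a.1, by omega⟩) (fun _ => ⟨p, by omega⟩)) ?_
      intro x hx y hy hf
      rcases hx with ⟨a, rfl⟩ | hx
      · rcases hy with ⟨b, rfl⟩ | hy
        · simp only [Sum.elim_inl, Fin.mk.injEq] at hf
          exact congrArg Sum.inl (Fin.ext hf)
        · have : y = Sum.inr z0 := hy
          subst this
          simp only [Sum.elim_inl, Sum.elim_inr, Fin.mk.injEq] at hf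
          exact absurd hf (by omega)
      · have hx' : x = Sum.inr z0 := hx
        subst hx'
        rcases hy with ⟨b, rfl⟩ | hy
        · simp only [Sum.elim_inl, Sum.elim_inr, Fin.mk.injEq] at hf
          exact absurd hf.symm (by omega)
        · have : y = Sum.inr z0 := hy
          subst this
          rfl
  · have hmem : ∀ x : Fin p ⊕ Fin (s + 1),
        x ∈ (Set.range Sum.inl ∪ {Sum.inr z0} : Set (Fin p ⊕ Fin (s+1)))ᶜ →
        ∃ b : Fin (s + 1), b ≠ z0 ∧ x = Sum.inr b := by
      intro x hx
      cases x with
      | inl a => exact absurd (Or.inl ⟨a, rfl⟩) hx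
      | inr b =>
        refine ⟨b, fun hb => ?_, rfl⟩
        exact hx (Or.inr (by simp [hb]))
    refine Kprop_mk hne (fun x hx y hy hxy => ?_) ?_
    · obtain ⟨b, hb, rfl⟩ := hmem x hx
      obtain ⟨b', hb', rfl⟩ := hmem y hy
      have : b ≠ b' := fun hbb => hxy (by rw [hbb])
      simpa [EKg] using this
    · refine card_le_of_inj_to_fin _ s
        (Sum.elim (fun _ => ⟨0, by omega⟩) (fun b => ⟨b.1 - 1, by omega⟩)) ?_
      intro x hx y hy hf
      obtain ⟨b, hb, rfl⟩ := hmem x hx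
      obtain ⟨b', hb', rfl⟩ := hmem y hy
      simp only [Sum.elim_inr, Fin.mk.injEq] at hf
      have hb1 : (b : ℕ) ≠ 0 := fun h0 => hb (Fin.ext (by simpa [hz0] using h0))
      have hb'1 : (b' : ℕ) ≠ 0 := fun h0 => hb' (Fin.ext (by simpa [hz0] using h0))
      exact congrArg Sum.inr (Fin.ext (by omega))

lemma memP_KE (m : ℕ) (hm1 : 1 ≤ m) (hm : m + 1 ≤ s) (hr1 : 1 ≤ r) :
    GProp.prod (Oprop (r : ℕ∞)) (Kprop (s : ℕ∞)) (KEg m (r + 1)) := by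
  set z0 : Fin (r + 1) := ⟨0, by omega⟩ with hz0
  refine ⟨⟨Sum.inl ⟨0, hm1⟩⟩,
    {x : Fin m ⊕ Fin (r + 1) | ∃ b, b ≠ z0 ∧ x = Sum.inr b}, fun hne => ?_, fun hne => ?_⟩
  · refine Oprop_mk hne (fun x hx y hy hadj => ?_) ?_
    · obtain ⟨b, hb, rfl⟩ := hx
      obtain ⟨b', hb', rfl⟩ := hy
      simpa [KEg] using hadj
    · refine card_le_of_inj_to_fin _ r
        (Sum.elim (fun _ => ⟨0, by omega⟩) (fun b => ⟨b.1 - 1, by omega⟩)) ?_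
      intro x hx y hy hf
      obtain ⟨b, hb, rfl⟩ := hx
      obtain ⟨b', hb', rfl⟩ := hy
      simp only [Sum.elim_inr, Fin.mk.injEq] at hf
      have hb1 : (b : ℕ) ≠ 0 := fun h0 => hb (Fin.ext (by simpa [hz0] using h0))
      have hb'1 : (b' : ℕ) ≠ 0 := fun h0 => hb' (Fin.ext (by simpa [hz0] using h0))
      exact congrArg Sum.inr (Fin.ext (by omega))
  · have hmem : ∀ x : Fin m ⊕ Fin (r + 1),
        x ∈ ({x : Fin m ⊕ Fin (r + 1) | ∃ b, b ≠ z0 ∧ x = Sum.inr b} : Set _)ᶜ →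
        (∃ a, x = Sum.inl a) ∨ x = Sum.inr z0 := by
      intro x hx
      cases x with
      | inl a => exact Or.inl ⟨a, rfl⟩
      | inr b =>
        right
        by_contra hb
        exact hx ⟨b, fun hbz => hb (by rw [hbz]), rfl⟩
    refine Kprop_mk hne (fun x hx y hy hxy => ?_) ?_
    · rcases hmem x hx with ⟨a, rfl⟩ | rfl
      · rcases hmem y hy with ⟨a', rfl⟩ | rfl
        · have : a ≠ a' := fun haa => hxy (by rw [haa])
          simpa [KEg] using this
        · simp [KEg]
      · rcases hmem y hy with ⟨a', rfl⟩ | rfl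
        · simp [KEg]
        · exact absurd rfl hxy
    · refine card_le_of_inj_to_fin _ s
        (Sum.elim (fun a => ⟨a.1, by omega⟩) (fun _ => ⟨m, by omega⟩)) ?_
      intro x hx y hy hf
      rcases hmem x hx with ⟨a, rfl⟩ | rfl
      · rcases hmem y hy with ⟨a', rfl⟩ | rfl
        · simp only [Sum.elim_inl, Fin.mk.injEq] at hf
          exact congrArg Sum.inl (Fin.ext hf)
        · simp only [Sum.elim_inl, Sum.elim_inr, Fin.mk.injEq] at hf
          exact absurd hf (by omega)
      · rcases hmem y hy with ⟨a', rfl⟩ | rfl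
        · simp only [Sum.elim_inl, Sum.elim_inr, Fin.mk.injEq] at hf
          exact absurd hf.symm (by omega)
        · rfl

end AuxC
section AuxD

variable {r s : ℕ}

lemma decompS {X : FGraph} {S : Set X.V}
    (h1 : S.Nonempty → Oprop (r : ℕ∞) (X.induce S)) :
    ∀ x ∈ S, ∀ y ∈ S, ¬ X.graph.Adj x y :=
  fun x hx y hy hadj => no_adj_of_O (h1 ⟨x, hx⟩) hx hy hadj

lemma decompT {X : FGraph} {S : Set X.V}
    (h2 : (Sᶜ).Nonempty → Kprop (s : ℕ∞) (X.induce Sᶜ)) :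
    ∀ x ∈ Sᶜ, ∀ y ∈ Sᶜ, x ≠ y → X.graph.Adj x y :=
  fun x hx y hy hne => adj_of_K (h2 ⟨x, hx⟩) hx hy hne

/-- `P`-graphs have at most `r + s` vertices. -/
lemma card_S_le_O {X : FGraph} {S : Set X.V}
    (h1 : S.Nonempty → Oprop (r : ℕ∞) (X.induce S)) : Fintype.card ↥S ≤ r := by
  rcases S.eq_empty_or_nonempty with hE | hne'
  · have hie : IsEmpty ↥S := Set.isEmpty_coe_sort.mpr hE
    rw [Fintype.card_eq_zero_iff.mpr hie]
    omega
  · exact card_le_of_O (h1 hne')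

lemma card_Sc_le_K {X : FGraph} {S : Set X.V}
    (h2 : (Sᶜ).Nonempty → Kprop (s : ℕ∞) (X.induce Sᶜ)) : Fintype.card ↥(Sᶜ) ≤ s := by
  rcases (Sᶜ).eq_empty_or_nonempty with hE | hne'
  · have hie : IsEmpty ↥(Sᶜ) := Set.isEmpty_coe_sort.mpr hE
    rw [Fintype.card_eq_zero_iff.mpr hie]
    omega
  · exact cardLE _ (card_le_of_K (h2 hne'))

lemma card_le_of_P {X : FGraph} (hP : GProp.prod (Oprop (r : ℕ∞)) (Kprop (s : ℕ∞)) X) :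
    Fintype.card X.V ≤ r + s := by
  obtain ⟨hne, S, h1, h2⟩ := hP
  have hcS : Fintype.card ↥S ≤ r := cardLE _ (card_S_le_O h1)
  have hcT : Fintype.card ↥(Sᶜ) ≤ s := cardLE _ (card_Sc_le_K h2)
  have := card_set_add_card_compl S
  omega

/-- No `P`-graph contains an induced `2K₂`. -/
lemma notP_2K2 {X : FGraph} (hP : GProp.prod (Oprop (r : ℕ∞)) (Kprop (s : ℕ∞)) X)
    (a b c d : X.V) (hab : X.graph.Adj a b) (hcd : X.graph.Adj c d)
    (hac : ¬X.graph.Adj a c) (had : ¬X.graph.Adj a d)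
    (hbc : ¬X.graph.Adj b c) (hbd : ¬X.graph.Adj b d)
    (hac' : a ≠ c) (had' : a ≠ d) (hbc' : b ≠ c) (hbd' : b ≠ d) : False := by
  obtain ⟨hne, S, h1, h2⟩ := hP
  have hS := decompS h1
  have hT := decompT h2
  have hx : ∃ x, x ∈ Sᶜ ∧ (x = a ∨ x = b) := by
    by_cases ha : a ∈ S
    · refine ⟨b, fun hb => hS a ha b hb hab, Or.inr rfl⟩
    · exact ⟨a, ha, Or.inl rfl⟩
  have hy : ∃ y, y ∈ Sᶜ ∧ (y = c ∨ y = d) := by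
    by_cases hc : c ∈ S
    · refine ⟨d, fun hd => hS c hc d hd hcd, Or.inr rfl⟩
    · exact ⟨c, hc, Or.inl rfl⟩
  obtain ⟨x, hxc, rfl | rfl⟩ := hx <;> obtain ⟨y, hyc, rfl | rfl⟩ := hy
  · exact hac (hT _ hxc _ hyc hac')
  · exact had (hT _ hxc _ hyc had')
  · exact hbc (hT _ hxc _ hyc hbc')
  · exact hbd (hT _ hxc _ hyc hbd')

/-- No `P`-graph contains an induced `C₄` (two non-edges, all cross pairs edges). -/
lemma notP_C4 {X : FGraph} (hP : GProp.prod (Oprop (r : ℕ∞)) (Kprop (s : ℕ∞)) X)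
    (a b c d : X.V) (hab : ¬X.graph.Adj a b) (hcd : ¬X.graph.Adj c d)
    (hab' : a ≠ b) (hcd' : c ≠ d)
    (hac : X.graph.Adj a c) (had : X.graph.Adj a d)
    (hbc : X.graph.Adj b c) (hbd : X.graph.Adj b d) : False := by
  obtain ⟨hne, S, h1, h2⟩ := hP
  have hS := decompS h1
  have hT := decompT h2
  have hx : ∃ x, x ∈ S ∧ (x = a ∨ x = b) := by
    by_cases ha : a ∈ S
    · exact ⟨a, ha, Or.inl rfl⟩
    · by_cases hb : b ∈ S
      · exact ⟨b, hb, Or.inr rfl⟩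
      · exact absurd (hT a ha b hb hab') hab
  have hy : ∃ y, y ∈ S ∧ (y = c ∨ y = d) := by
    by_cases hc : c ∈ S
    · exact ⟨c, hc, Or.inl rfl⟩
    · by_cases hd : d ∈ S
      · exact ⟨d, hd, Or.inr rfl⟩
      · exact absurd (hT c hc d hd hcd') hcd
  obtain ⟨x, hxm, rfl | rfl⟩ := hx <;> obtain ⟨y, hym, rfl | rfl⟩ := hy
  · exact hS _ hxm _ hym hac
  · exact hS _ hxm _ hym had
  · exact hS _ hxm _ hym hbc
  · exact hS _ hxm _ hym hbd

/-- An independent set of size `≥ r+1` along with an edge disjoint from and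
non-adjacent to it is impossible in a `P`-graph. -/
lemma notP_bigE {X : FGraph} (hP : GProp.prod (Oprop (r : ℕ∞)) (Kprop (s : ℕ∞)) X)
    (E : Set X.V) (k1 k2 : X.V) (hk : k1 ≠ k2) (hkadj : X.graph.Adj k1 k2)
    (hE : ∀ e ∈ E, (e ≠ k1 ∧ e ≠ k2) ∧ (¬X.graph.Adj e k1 ∧ ¬X.graph.Adj e k2))
    (hcard : r + 1 ≤ Fintype.card ↥E) : False := by
  obtain ⟨hne, S, h1, h2⟩ := hP
  have hS := decompS h1
  have hT := decompT h2
  have hk' : ∃ k, k ∈ Sᶜ ∧ (k = k1 ∨ k = k2) := by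
    by_cases h1' : k1 ∈ S
    · refine ⟨k2, fun hk2 => hS _ h1' _ hk2 hkadj, Or.inr rfl⟩
    · exact ⟨k1, h1', Or.inl rfl⟩
  obtain ⟨k, hkc, hk12⟩ := hk'
  have hEsub : E ⊆ S := by
    intro e he
    by_contra hes
    rcases hk12 with rfl | rfl
    · exact (hE e he).2.1 (hT e hes k hkc (hE e he).1.1)
    · exact (hE e he).2.2 (hT e hes k hkc (hE e he).1.2)
  have hcS : Fintype.card ↥E ≤ Fintype.card ↥S :=
    Fintype.card_le_of_injective (fun x => ⟨x.1, hEsub x.2⟩)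
      (fun x y hxy => Subtype.ext (by simpa [Subtype.ext_iff] using hxy))
  have hSne : S.Nonempty := by
    obtain ⟨e, he⟩ := Set.nonempty_coe_sort.mp ((Fintype.card_pos_iff (α := ↥E)).mp (by omega))
    exact ⟨e, hEsub he⟩
  have hfin : Fintype.card ↥S ≤ r := cardLE _ (card_le_of_O (h1 hSne))
  omega

/-- An independent set of size `≥ r` together with a disjoint complete set of
size `≥ s+1` (no cross edges) is impossible in a `P`-graph. -/
lemma notP_E_bigK {X : FGraph} (hs1 : 1 ≤ s)
    (hP : GProp.prod (Oprop (r : ℕ∞)) (Kprop (s : ℕ∞)) X)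
    (E K : Set X.V) (hEK : ∀ e ∈ E, e ∉ K)
    (hKadj : ∀ k ∈ K, ∀ k' ∈ K, k ≠ k' → X.graph.Adj k k')
    (hcross : ∀ e ∈ E, ∀ k ∈ K, e ≠ k ∧ ¬X.graph.Adj e k)
    (hcE : r ≤ Fintype.card ↥E) (hcK : s + 1 ≤ Fintype.card ↥K) : False := by
  obtain ⟨hne, S, h1, h2⟩ := hP
  have hS := decompS h1
  have hT := decompT h2
  obtain ⟨k1, hk1, k2, hk2, hk12⟩ := exists_pair_set (S := K) (by omega)
  have hkc : ∃ k, k ∈ Sᶜ ∧ k ∈ K := by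
    by_cases h1' : k1 ∈ S
    · exact ⟨k2, fun hx => hS _ h1' _ hx (hKadj _ hk1 _ hk2 hk12), hk2⟩
    · exact ⟨k1, h1', hk1⟩
  obtain ⟨k, hkcompl, hkK⟩ := hkc
  have hEsub : E ⊆ S := by
    intro e he
    by_contra hes
    exact (hcross e he k hkK).2 (hT e hes k hkcompl (hcross e he k hkK).1)
  have hkS : ∃ k0, k0 ∈ K ∧ k0 ∈ S := by
    by_contra hno
    push_neg at hno
    have hs2 : K ⊆ Sᶜ := fun x hx => hno x hx
    have h1'' : Fintype.card ↥K ≤ Fintype.card ↥(Sᶜ) :=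
      Fintype.card_le_of_injective (fun x => ⟨x.1, hs2 x.2⟩)
        (fun x y hxy => Subtype.ext (by simpa [Subtype.ext_iff] using hxy))
    have h2'' : Fintype.card ↥(Sᶜ) ≤ s := cardLE _ (card_le_of_K (h2 ⟨k, hkcompl⟩))
    omega
  obtain ⟨k0, hk0K, hk0S⟩ := hkS
  have hinj : Fintype.card (Option ↥E) ≤ Fintype.card ↥S := by
    refine Fintype.card_le_of_injective
      (fun x => match x with
        | none => ⟨k0, hk0S⟩
        | some e => ⟨e.1, hEsub e.2⟩) ?_
    rintro (_ | x) (_ | y) hxy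
    · rfl
    · exact absurd (congrArg Subtype.val hxy).symm (fun hh => hEK _ y.2 (hh ▸ hk0K))
    · exact absurd (congrArg Subtype.val hxy) (fun hh => hEK _ x.2 (hh ▸ hk0K))
    · exact congrArg some (Subtype.ext (by simpa [Subtype.ext_iff] using hxy))
  rw [Fintype.card_option] at hinj
  have hSne : S.Nonempty := ⟨k0, hk0S⟩
  have hfin : Fintype.card ↥S ≤ r := cardLE _ (card_le_of_O (h1 hSne))
  omega

/-- Isolated set of size `≥ r`, a complete set `K` with `≥ 2` elements, and a
pendant vertex `w` attached only to `k0 ∈ K` is impossible in a `P`-graph. -/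
lemma notP_pendant {X : FGraph} (hP : GProp.prod (Oprop (r : ℕ∞)) (Kprop (s : ℕ∞)) X)
    (E K : Set X.V) (w k0 k1 : X.V) (hk0 : k0 ∈ K) (hk1 : k1 ∈ K) (hk01 : k0 ≠ k1)
    (hEiso : ∀ e ∈ E, ∀ x, ¬X.graph.Adj e x)
    (hKadj : ∀ k ∈ K, ∀ k' ∈ K, k ≠ k' → X.graph.Adj k k')
    (hwK : w ∉ K) (hwE : w ∉ E) (hEK : ∀ e ∈ E, e ∉ K)
    (hwadj : ∀ k ∈ K, k ≠ k0 → ¬X.graph.Adj w k)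
    (hcE : r ≤ Fintype.card ↥E) : False := by
  obtain ⟨hne, S, h1, h2⟩ := hP
  have hS := decompS h1
  have hT := decompT h2
  -- a helper closing the goal given some k* ∈ Sᶜ ∩ K and some a0 ∈ S \ E
  have finish : ∀ k ∈ Sᶜ, k ∈ K → ∀ a0 ∈ S, a0 ∉ E → False := by
    intro k hkc hkK a0 ha0S ha0E
    have hEsub : E ⊆ S := by
      intro e he
      by_contra hes
      exact hEiso e he k (hT e hes k hkc (fun hek => hEK e he (hek ▸ hkK)))
    have hinj : Fintype.card (Option ↥E) ≤ Fintype.card ↥S := by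
      refine Fintype.card_le_of_injective
        (fun x => match x with
          | none => ⟨a0, ha0S⟩
          | some e => ⟨e.1, hEsub e.2⟩) ?_
      rintro (_ | x) (_ | y) hxy
      · rfl
      · have hv : a0 = ↑y := congrArg Subtype.val hxy
        exact absurd (hv.symm ▸ y.2) ha0E
      · have hv : (↑x : X.V) = a0 := congrArg Subtype.val hxy
        exact absurd (hv ▸ x.2) ha0E
      · exact congrArg some (Subtype.ext (by simpa [Subtype.ext_iff] using hxy))
    rw [Fintype.card_option] at hinj
    have hfin : Fintype.card ↥S ≤ r := cardLE _ (card_le_of_O (h1 ⟨a0, ha0S⟩))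
    omega
  by_cases hk1S : k1 ∈ S
  · -- then k0 ∈ Sᶜ, and a0 := k1
    have hk0c : k0 ∈ Sᶜ := fun hk0S => hS _ hk0S _ hk1S (hKadj _ hk0 _ hk1 hk01)
    exact finish k0 hk0c hk0 k1 hk1S (fun hk1E => hEK _ hk1E hk1)
  · -- k1 ∈ Sᶜ; then w ∈ S, and a0 := w
    have hwS : w ∈ S := by
      by_contra hws
      exact hwadj k1 hk1 (Ne.symm hk01) (hT w hws k1 hk1S (fun hwk => hwK (hwk ▸ hk1)))
    exact finish k1 hk1S hk1 w hwS hwE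

/-- An edgeless graph in `P` has at most `r+1` vertices. -/
lemma notP_edgeless_big {X : FGraph}
    (hP : GProp.prod (Oprop (r : ℕ∞)) (Kprop (s : ℕ∞)) X)
    (hadj : ∀ x y : X.V, ¬X.graph.Adj x y) (hcard : r + 2 ≤ Fintype.card X.V) : False := by
  obtain ⟨hne, S, h1, h2⟩ := hP
  have hT := decompT h2
  have hcS : Fintype.card ↥S ≤ r := cardLE _ (card_S_le_O h1)
  have hcT : Fintype.card ↥(Sᶜ) ≤ 1 := by
    refine Fintype.card_le_one_iff.mpr (fun a b => ?_)
    by_contra hab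
    exact hadj a.1 b.1 (hT a.1 a.2 b.1 b.2 (fun hv => hab (Subtype.ext hv)))
  have := card_set_add_card_compl S
  omega

end AuxD
section AuxE

lemma exists_third {α : Type*} [Fintype α] (h : 3 ≤ Fintype.card α) (a b : α) :
    ∃ c, c ≠ a ∧ c ≠ b := by
  classical
  by_contra hno
  push_neg at hno
  have hinj : Function.Injective (fun c : α => decide (c = a)) := by
    intro c d hcd
    simp only [decide_eq_decide] at hcd
    by_cases hc : c = a
    · rw [hc, hcd.mp hc]
    · rw [hno c hc, hno d (fun hd => hc (hcd.mpr hd))]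
  have := Fintype.card_le_of_injective _ hinj
  simp only [Fintype.card_bool] at this
  omega

set_option maxHeartbeats 2000000 in
lemma mainLemma (r s : ℕ) (hr : 2 ≤ r) (hs : 2 ≤ s) (Q₁ Q₂ : GProp)
    (hQ₁ : IsGProp Q₁) (hQ₂ : IsGProp Q₂)
    (h : GProp.prod (Oprop (r : ℕ∞)) (Kprop (s : ℕ∞)) = GProp.prod Q₁ Q₂)
    (hstart : ∃ G, Q₁ G ∧ ∃ u v : G.V, u ≠ v ∧ ¬ G.graph.Adj u v) :
    Q₁ = Oprop (r : ℕ∞) ∧ Q₂ = Kprop (s : ℕ∞) := by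
  have hco : ∀ (G H : FGraph), Q₁ G → Q₂ H → ∀ c : G.V → H.V → Prop,
      GProp.prod (Oprop (r : ℕ∞)) (Kprop (s : ℕ∞)) (fov G H c) := by
    intro G H h1 h2 c
    rw [h]
    exact combo hQ₁ hQ₂ h1 h2 c
  have hdec : ∀ X : FGraph, GProp.prod (Oprop (r : ℕ∞)) (Kprop (s : ℕ∞)) X →
      ∃ S : Set X.V, (S.Nonempty → Q₁ (X.induce S)) ∧
        ((Sᶜ).Nonempty → Q₂ (X.induce (Sᶜ : Set X.V))) := by
    intro X hX
    rw [h] at hX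
    exact hX.2
  -- Step 2 : every graph in Q₂ is complete
  have hcompl₂ : ∀ G, Q₂ G → ∀ u v : G.V, u ≠ v → G.graph.Adj u v := by
    intro G hG u v huv
    by_contra hnadj
    obtain ⟨G₁, hG₁, a, b, hab, hnab⟩ := hstart
    have hP := hco G₁ G hG₁ hG (fun _ _ => True)
    refine notP_C4 hP (Sum.inl a) (Sum.inl b) (Sum.inr u) (Sum.inr v)
      ?_ ?_ ?_ ?_ ?_ ?_ ?_ ?_
    · simpa using hnab
    · simpa using hnadj
    · exact fun he => hab (Sum.inl_injective he)
    · exact fun he => huv (Sum.inr_injective he)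
    · simp
    · simp
    · simp
    · simp
  -- Step 3 : Q₂ contains a graph with at least two vertices
  have hbig₂ : ∃ G, Q₂ G ∧ 2 ≤ Fintype.card G.V := by
    by_contra hno
    push_neg at hno
    obtain ⟨W, hW⟩ := hQ₂.nonempty
    have hWpos : 0 < Fintype.card W.V := Fintype.card_pos_iff.mpr (hQ₂.vertexNonempty _ hW)
    have hWcard : Fintype.card W.V = 1 := by
      have h1 := hno W hW
      omega
    obtain ⟨w0⟩ := hQ₂.vertexNonempty _ hW
    have hWsub : ∀ x y : W.V, x = y :=
      fun x y => Fintype.card_le_one_iff.mp (by omega) x y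
    have hX := memP_EK (r := r) (s := s) r s (by omega) le_rfl (by omega) le_rfl
    obtain ⟨S, h1, h2⟩ := hdec _ hX
    have hcard : Fintype.card ↥S + Fintype.card ↥(Sᶜ) = r + s := by
      have hq := card_set_add_card_compl S
      simpa using hq
    have hSc1 : Fintype.card ↥(Sᶜ) ≤ 1 := by
      rcases (Sᶜ).eq_empty_or_nonempty with hE | hne'
      · rw [Fintype.card_eq_zero_iff.mpr (Set.isEmpty_coe_sort.mpr hE)]
        omega
      · exact cardLE _ (Nat.lt_succ_iff.mp (hno _ (h2 hne')))
    have hSne : S.Nonempty :=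
      Set.nonempty_coe_sort.mp ((Fintype.card_pos_iff (α := ↥S)).mp (by omega))
    have hQS := h1 hSne
    rcases (Sᶜ).eq_empty_or_nonempty with hScE | ⟨v0, hv0⟩
    · -- S is everything : r+s+1 vertices in a P-graph, impossible
      have h0 : Fintype.card ↥(Sᶜ) = 0 :=
        Fintype.card_eq_zero_iff.mpr (Set.isEmpty_coe_sort.mpr hScE)
      have hP2 := hco _ W hQS hW (fun _ _ => False)
      have hbound : Fintype.card (↥S ⊕ W.V) ≤ r + s := cardLE _ (card_le_of_P hP2)
      have hsum : Fintype.card (↥S ⊕ W.V) = Fintype.card ↥S + Fintype.card W.V :=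
        Fintype.card_sum
      omega
    · have hSub : ∀ x, x ∉ S → x = v0 := by
        intro x hx
        have hx' : x ∈ Sᶜ := hx
        have heq := Fintype.card_le_one_iff.mp hSc1 ⟨x, hx'⟩ ⟨v0, hv0⟩
        exact congrArg Subtype.val heq
      have hmemS : ∀ x : (EKg r s).V, x ≠ v0 → x ∈ S := by
        intro x hxv
        by_contra hx
        exact hxv (hSub x hx)
      rcases v0 with i0 | j0
      · -- the missing vertex is on the edgeless side
        obtain ⟨i1, hi1⟩ := Fintype.exists_ne_of_one_lt_card
          (by simpa using (by omega : 1 < r)) i0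
        have hi1S : Sum.inl i1 ∈ S := hmemS _ (by simp [hi1])
        have hj0S : (Sum.inr ⟨0, by omega⟩ : (EKg r s).V) ∈ S := hmemS _ (by simp)
        have hj1S : (Sum.inr ⟨1, by omega⟩ : (EKg r s).V) ∈ S := hmemS _ (by simp)
        have hP2 := hco _ W hQS hW (fun v _ => v.1 = Sum.inl i1)
        refine notP_2K2 hP2 (Sum.inl ⟨Sum.inl i1, hi1S⟩) (Sum.inr w0)
          (Sum.inl ⟨Sum.inr ⟨0, by omega⟩, hj0S⟩) (Sum.inl ⟨Sum.inr ⟨1, by omega⟩, hj1S⟩)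
          ?_ ?_ ?_ ?_ ?_ ?_ ?_ ?_ ?_ ?_
        · simp
        · simp [FGraph.induce, EKg, Fin.ext_iff]
        · simp [FGraph.induce, EKg]
        · simp [FGraph.induce, EKg]
        · simp
        · simp
        · exact fun he => nomatch (congrArg Subtype.val (Sum.inl_injective he))
        · exact fun he => nomatch (congrArg Subtype.val (Sum.inl_injective he))
        · simp
        · simp
      · -- the missing vertex is on the complete side
        by_cases h3 : 3 ≤ s
        · -- pendant construction
          obtain ⟨j1, hj1⟩ := Fintype.exists_ne_of_one_lt_card
            (by simpa using (by omega : 1 < s)) j0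
          obtain ⟨j2, hj20, hj21⟩ := exists_third (by simpa using h3) j0 j1
          have hj1S : Sum.inr j1 ∈ S := hmemS _ (by simp [hj1])
          have hj2S : Sum.inr j2 ∈ S := hmemS _ (by simp [hj20])
          have hP2 := hco _ W hQS hW (fun v _ => v.1 = Sum.inr j1)
          refine notP_pendant hP2
            {y : ↥S ⊕ W.V | ∃ (i : Fin r) (hi : Sum.inl i ∈ S), y = Sum.inl ⟨Sum.inl i, hi⟩}
            {y : ↥S ⊕ W.V | ∃ (j : Fin s) (hj : Sum.inr j ∈ S), y = Sum.inl ⟨Sum.inr j, hj⟩}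
            (Sum.inr w0) (Sum.inl ⟨Sum.inr j1, hj1S⟩) (Sum.inl ⟨Sum.inr j2, hj2S⟩)
            ⟨j1, hj1S, rfl⟩ ⟨j2, hj2S, rfl⟩ ?_ ?_ ?_ ?_ ?_ ?_ ?_ ?_
          · -- k0 ≠ k1
            intro he
            exact hj21 (Sum.inr_injective (congrArg Subtype.val (Sum.inl_injective he))).symm
          · -- hEiso
            rintro e ⟨i, hi, rfl⟩ x hadj
            rcases x with ⟨⟨a | b, hm⟩⟩ | z
            · simpa [FGraph.induce, EKg] using hadj
            · simpa [FGraph.induce, EKg] using hadj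
            · simpa using hadj
          · -- hKadj
            rintro k ⟨j, hj, rfl⟩ k' ⟨j', hj', rfl⟩ hne
            have hjj : j ≠ j' := by
              intro he
              subst he
              exact hne rfl
            simpa [FGraph.induce, EKg] using hjj
          · -- w ∉ K
            rintro ⟨j, hj, heq⟩
            exact nomatch heq
          · -- w ∉ E
            rintro ⟨i, hi, heq⟩
            exact nomatch heq
          · -- E ∩ K = ∅
            rintro e ⟨i, hi, rfl⟩ ⟨j, hj, heq⟩
            exact nomatch (congrArg Subtype.val (Sum.inl_injective heq))
          · -- w adjacent only to k0
            rintro k ⟨j, hj, rfl⟩ hkne hadj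
            have hjj : j = j1 := by simpa using hadj
            subst hjj
            exact hkne (congrArg Sum.inl (Subtype.ext rfl))
          · -- card E ≥ r
            refine cardGE _ (le_card_of_fin_inj _ r
              (fun i => Sum.inl ⟨Sum.inl i, hmemS _ (by simp)⟩) (fun i => ⟨i, _, rfl⟩) ?_)
            intro i i' heq
            exact Sum.inl_injective (congrArg Subtype.val (Sum.inl_injective heq))
        · -- s = 2 : the whole graph spanned is edgeless with r+2 vertices
          have hSedge : ∀ x ∈ S, ∀ y ∈ S, ¬ (EKg r s).graph.Adj x y := by
            rintro (a | b) hx (a' | b') hy hadj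
            · simpa [EKg] using hadj
            · simpa [EKg] using hadj
            · simpa [EKg] using hadj
            · have hb : b ≠ j0 := fun he => (hv0 : Sum.inr j0 ∉ S) (he ▸ hx)
              have hb' : b' ≠ j0 := fun he => (hv0 : Sum.inr j0 ∉ S) (he ▸ hy)
              have hbb : b ≠ b' := by simpa [EKg] using hadj
              have h3le : 3 ≤ Fintype.card (Fin s) := three_le_card b b' j0 hbb hb hb'
              simp only [Fintype.card_fin] at h3le
              omega
          have hP2 := hco _ W hQS hW (fun _ _ => False)
          refine notP_edgeless_big hP2 ?_ ?_
          · rintro (x | z) (y | z') hadj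
            · exact hSedge x.1 x.2 y.1 y.2 (by simpa [FGraph.induce] using hadj)
            · simpa using hadj
            · simpa using hadj
            · have hzz := hWsub z z'
              subst hzz
              exact W.graph.loopless.irrefl z (by simpa using hadj)
          · have hsum : Fintype.card (↥S ⊕ W.V) = Fintype.card ↥S + Fintype.card W.V :=
              Fintype.card_sum
            exact cardGE _ (by omega : r + 2 ≤ Fintype.card (↥S ⊕ W.V))

  -- a fixed Q₂-graph with an edge
  obtain ⟨G₂, hG₂, hc2⟩ := hbig₂
  obtain ⟨x2, y2, hxy2⟩ := Fintype.exists_pair_of_one_lt_card (α := G₂.V) (by omega)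
  have hadj2 : G₂.graph.Adj x2 y2 := hcompl₂ _ hG₂ _ _ hxy2
  -- Step 4 : every graph in Q₁ is edgeless
  have hedgeless₁ : ∀ G, Q₁ G → ∀ u v : G.V, ¬ G.graph.Adj u v := by
    intro G hG u v hadj
    have hP := hco G G₂ hG hG₂ (fun _ _ => False)
    exact notP_2K2 hP (Sum.inl u) (Sum.inl v) (Sum.inr x2) (Sum.inr y2)
      (by simpa using hadj) (by simpa using hadj2) (by simp) (by simp) (by simp) (by simp)
      (by simp) (by simp) (by simp) (by simp)
  -- Step a : every graph in Q₁ has at most r vertices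
  have hsize₁ : ∀ G, Q₁ G → Fintype.card G.V ≤ r := by
    intro G hG
    by_contra hbig
    push_neg at hbig
    have hP := hco G G₂ hG hG₂ (fun _ _ => False)
    have hcard : r + 1 ≤ Fintype.card ↥(Set.range (Sum.inl : G.V → G.V ⊕ G₂.V)) := by
      have hev : Fintype.card ↥(Set.range (Sum.inl : G.V → G.V ⊕ G₂.V)) = Fintype.card G.V :=
        (Fintype.card_congr (Equiv.ofInjective Sum.inl Sum.inl_injective)).symm
      omega
    refine notP_bigE hP (Set.range Sum.inl) (Sum.inr x2) (Sum.inr y2)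
      (fun he => hxy2 (Sum.inr_injective he)) (by simpa using hadj2) ?_ (cardGE _ hcard)
    rintro e ⟨a, rfl⟩
    exact ⟨⟨by simp, by simp⟩, by simp, by simp⟩
  -- Step c : decompose the edgeless graph on r+1 vertices
  have hstepc : (∃ G, Q₁ G ∧ G.graph = ⊥ ∧ Fintype.card G.V = r) ∧
      (∃ H, Q₂ H ∧ H.graph = ⊥ ∧ Fintype.card H.V = 1) := by
    have hX := memP_E (r := r) (s := s) (by omega) (by omega) (r + 1) (by omega) le_rfl
    obtain ⟨S, h1, h2⟩ := hdec _ hX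
    have hcard : Fintype.card ↥S + Fintype.card ↥(Sᶜ) = r + 1 := by
      have hq := card_set_add_card_compl S
      simpa using hq
    have hSc1 : Fintype.card ↥(Sᶜ) ≤ 1 := by
      rcases (Sᶜ).eq_empty_or_nonempty with hE | hne'
      · rw [Fintype.card_eq_zero_iff.mpr (Set.isEmpty_coe_sort.mpr hE)]
        omega
      · refine Fintype.card_le_one_iff.mpr (fun a b => ?_)
        by_contra hab
        have hvne : a.1 ≠ b.1 := fun hv => hab (Subtype.ext hv)
        have hadj := hcompl₂ _ (h2 hne') ⟨a.1, a.2⟩ ⟨b.1, b.2⟩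
          (fun he => hvne (congrArg Subtype.val he))
        have : (Eg (r + 1)).graph.Adj a.1 b.1 := by
          simpa [FGraph.induce] using hadj
        simpa [Eg] using this
    have hSne : S.Nonempty :=
      Set.nonempty_coe_sort.mp ((Fintype.card_pos_iff (α := ↥S)).mp (by omega))
    have hSle : Fintype.card ↥S ≤ r := cardLE _ (hsize₁ _ (h1 hSne))
    have hSr : Fintype.card ↥S = r := by omega
    have hSc : Fintype.card ↥(Sᶜ) = 1 := by omega
    have hScne : (Sᶜ).Nonempty :=
      Set.nonempty_coe_sort.mp ((Fintype.card_pos_iff (α := ↥(Sᶜ))).mp (by omega))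
    refine ⟨⟨_, h1 hSne, induce_bot_of (fun x _ y _ hadj => by simpa [Eg] using hadj),
      cardEQ _ hSr⟩, ⟨_, h2 hScne, induce_bot_of (fun x _ y _ hadj => by simpa [Eg] using hadj),
      cardEQ _ hSc⟩⟩
  obtain ⟨⟨G1r, hG1rQ, hG1rbot, hG1rcard⟩, ⟨H1, hH1Q, hH1bot, hH1card⟩⟩ := hstepc
  -- Step e : every graph in Q₂ has at most s vertices
  have hsize₂ : ∀ G, Q₂ G → Fintype.card G.V ≤ s := by
    intro G hG
    by_contra hbig
    push_neg at hbig
    have hP := hco G1r G hG1rQ hG (fun _ _ => False)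
    have hcE : r ≤ Fintype.card ↥(Set.range (Sum.inl : G1r.V → G1r.V ⊕ G.V)) := by
      have hev : Fintype.card ↥(Set.range (Sum.inl : G1r.V → G1r.V ⊕ G.V))
          = Fintype.card G1r.V :=
        (Fintype.card_congr (Equiv.ofInjective Sum.inl Sum.inl_injective)).symm
      omega
    have hcK : s + 1 ≤ Fintype.card ↥(Set.range (Sum.inr : G.V → G1r.V ⊕ G.V)) := by
      have hev : Fintype.card ↥(Set.range (Sum.inr : G.V → G1r.V ⊕ G.V))
          = Fintype.card G.V :=
        (Fintype.card_congr (Equiv.ofInjective Sum.inr Sum.inr_injective)).symm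
      omega
    refine notP_E_bigK (by omega) hP (Set.range Sum.inl) (Set.range Sum.inr) ?_ ?_ ?_
      (cardGE _ hcE) (cardGE _ hcK)
    · rintro e ⟨a, rfl⟩ ⟨b, heq⟩
      exact nomatch heq
    · rintro k ⟨a, rfl⟩ k' ⟨b, rfl⟩ hne
      have : G.graph.Adj a b := hcompl₂ _ hG a b (fun he => hne (congrArg _ he))
      simpa using this
    · rintro e ⟨a, rfl⟩ k ⟨b, rfl⟩
      exact ⟨by simp, by simp⟩
  -- Step f : decompose the complete graph on s+1 vertices
  have hstepf : (∃ G, Q₁ G ∧ G.graph = ⊤ ∧ Fintype.card G.V = 1) ∧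
      (∃ H, Q₂ H ∧ H.graph = ⊤ ∧ Fintype.card H.V = s) := by
    have hX := memP_K (r := r) (s := s) (by omega) (by omega) (s + 1) (by omega) le_rfl
    obtain ⟨S, h1, h2⟩ := hdec _ hX
    have hcard : Fintype.card ↥S + Fintype.card ↥(Sᶜ) = s + 1 := by
      have hq := card_set_add_card_compl S
      simpa using hq
    have hS1 : Fintype.card ↥S ≤ 1 := by
      rcases S.eq_empty_or_nonempty with hE | hne'
      · rw [Fintype.card_eq_zero_iff.mpr (Set.isEmpty_coe_sort.mpr hE)]
        omega
      · refine Fintype.card_le_one_iff.mpr (fun a b => ?_)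
        by_contra hab
        have hvne : a.1 ≠ b.1 := fun hv => hab (Subtype.ext hv)
        refine hedgeless₁ _ (h1 hne') ⟨a.1, a.2⟩ ⟨b.1, b.2⟩ ?_
        simpa [FGraph.induce, Kg, Subtype.ext_iff] using hvne
    have hScle : Fintype.card ↥(Sᶜ) ≤ s := by
      have hScne : (Sᶜ).Nonempty :=
        Set.nonempty_coe_sort.mp ((Fintype.card_pos_iff (α := ↥(Sᶜ))).mp (by omega))
      exact cardLE _ (hsize₂ _ (h2 hScne))
    have hSc : Fintype.card ↥(Sᶜ) = s := by omega
    have hS1' : Fintype.card ↥S = 1 := by omega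
    have hSne : S.Nonempty :=
      Set.nonempty_coe_sort.mp ((Fintype.card_pos_iff (α := ↥S)).mp (by omega))
    have hScne : (Sᶜ).Nonempty :=
      Set.nonempty_coe_sort.mp ((Fintype.card_pos_iff (α := ↥(Sᶜ))).mp (by omega))
    refine ⟨⟨_, h1 hSne, induce_top_of (fun x _ y _ hxy => by simpa [Kg] using hxy),
      cardEQ _ hS1'⟩, ⟨_, h2 hScne, induce_top_of (fun x _ y _ hxy => by simpa [Kg] using hxy),
      cardEQ _ hSc⟩⟩
  obtain ⟨⟨GK1, hGK1Q, hGK1top, hGK1card⟩, ⟨GKs, hGKsQ, hGKstop, hGKscard⟩⟩ := hstepf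
  have hGK1bot : GK1.graph = ⊥ := by
    rw [hGK1top]
    exact (bot_eq_top_of_card_le_one (le_of_eq hGK1card)).symm
  have hH1top : H1.graph = ⊤ := by
    rw [hH1bot]
    exact bot_eq_top_of_card_le_one (le_of_eq hH1card)
  -- Step g : all edgeless graphs of size 1..r are in Q₁
  have hEn : ∀ n, 1 ≤ n → n ≤ r → ∃ G, Q₁ G ∧ G.graph = ⊥ ∧ Fintype.card G.V = n := by
    intro n h1n hnr
    rcases Nat.lt_or_ge n 2 with hn1 | hn2
    · have : n = 1 := by omega
      exact this ▸ ⟨GK1, hGK1Q, hGK1bot, hGK1card⟩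
    · set m := n - 1 with hm
      have hX := memP_EK' (r := r) (s := s) m (by omega) (by omega) (by omega)
      obtain ⟨S, h1, h2⟩ := hdec _ hX
      have hone : ∀ j j' : Fin (s + 1), Sum.inr j ∈ S → Sum.inr j' ∈ S → j = j' := by
        intro j j' hj hj'
        by_contra hne
        refine hedgeless₁ _ (h1 ⟨_, hj⟩) ⟨Sum.inr j, hj⟩ ⟨Sum.inr j', hj'⟩ ?_
        simpa [FGraph.induce, EKg] using hne
      have hsome : ∃ j, Sum.inr j ∈ S := by
        by_contra hno2
        push_neg at hno2
        have hsub : s + 1 ≤ Fintype.card ↥(Sᶜ) :=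
          cardGE _ (le_card_of_fin_inj (Sᶜ) (s + 1) (fun j => Sum.inr j) (fun j => hno2 j)
            (fun a b hab => Sum.inr_injective hab))
        have hScne : (Sᶜ).Nonempty := ⟨Sum.inr ⟨0, by omega⟩, hno2 _⟩
        have hle : Fintype.card ↥(Sᶜ) ≤ s := cardLE _ (hsize₂ _ (h2 hScne))
        omega
      obtain ⟨jstar, hjstar⟩ := hsome
      have halli : ∀ i : Fin m, Sum.inl i ∈ S := by
        intro i
        by_contra hi
        have hj2 : ∃ j, Sum.inr j ∈ Sᶜ := by
          obtain ⟨j1, hj1ne⟩ := Fintype.exists_ne_of_one_lt_card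
            (by simpa using (by omega : 1 < s + 1)) jstar
          by_cases hj1 : Sum.inr j1 ∈ S
          · exact absurd (hone _ _ hj1 hjstar) hj1ne
          · exact ⟨j1, hj1⟩
        obtain ⟨j, hj⟩ := hj2
        have hadj := hcompl₂ _ (h2 ⟨_, hj⟩) ⟨Sum.inl i, hi⟩ ⟨Sum.inr j, hj⟩
          (fun he => nomatch (congrArg Subtype.val he))
        have : (EKg m (s + 1)).graph.Adj (Sum.inl i) (Sum.inr j) := by
          simpa [FGraph.induce] using hadj
        simpa [EKg] using this
      have hk1 : n ≤ Fintype.card ↥S := by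
        refine le_card_of_fin_inj _ n
          (fun t => if ht : (t : ℕ) < m then Sum.inl ⟨t, ht⟩ else Sum.inr jstar) ?_ ?_
        · intro t
          by_cases ht : (t : ℕ) < m
          · simp only [dif_pos ht]; exact halli _
          · simp only [dif_neg ht]; exact hjstar
        · intro t t' heq
          by_cases ht : (t : ℕ) < m <;> by_cases ht' : (t' : ℕ) < m
          · simp only [dif_pos ht, dif_pos ht'] at heq
            have := Sum.inl_injective heq
            exact Fin.ext (by simpa [Fin.ext_iff] using this)
          · simp only [dif_pos ht, dif_neg ht'] at heq
            exact nomatch heq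
          · simp only [dif_neg ht, dif_pos ht'] at heq
            exact nomatch heq
          · have h1t := t.isLt
            have h2t := t'.isLt
            exact Fin.ext (by omega)
      have hk2 : Fintype.card ↥S ≤ n := by
        refine card_le_of_inj_to_fin _ n
          (Sum.elim (fun i => ⟨i.1, by omega⟩) (fun _ => ⟨m, by omega⟩)) ?_
        rintro (a | b) hx (a' | b') hy heq
        · simp only [Sum.elim_inl, Fin.mk.injEq] at heq
          exact congrArg Sum.inl (Fin.ext heq)
        · simp only [Sum.elim_inl, Sum.elim_inr, Fin.mk.injEq] at heq
          exact absurd heq (by omega)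
        · simp only [Sum.elim_inl, Sum.elim_inr, Fin.mk.injEq] at heq
          exact absurd heq.symm (by omega)
        · exact congrArg Sum.inr (hone _ _ hx hy)
      have hcS : Fintype.card ↥S = n := le_antisymm hk2 hk1
      refine ⟨_, h1 ⟨_, hjstar⟩, induce_bot_of ?_, cardEQ _ hcS⟩
      rintro (a | b) hx (a' | b') hy hadj
      · simpa [EKg] using hadj
      · simpa [EKg] using hadj
      · simpa [EKg] using hadj
      · have hbb := hone _ _ hx hy
        subst hbb
        exact (EKg m (s + 1)).graph.loopless.irrefl _ hadj
  -- Step h : all complete graphs of size 1..s are in Q₂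
  have hKn : ∀ g, 1 ≤ g → g ≤ s → ∃ G, Q₂ G ∧ G.graph = ⊤ ∧ Fintype.card G.V = g := by
    intro g h1g hgs
    rcases Nat.lt_or_ge g 2 with hg1 | hg2
    · have : g = 1 := by omega
      exact this ▸ ⟨H1, hH1Q, hH1top, hH1card⟩
    · set m := g - 1 with hm
      have hX := memP_KE (r := r) (s := s) m (by omega) (by omega) (by omega)
      obtain ⟨S, h1, h2⟩ := hdec _ hX
      have hone : ∀ j j' : Fin (r + 1), Sum.inr j ∈ Sᶜ → Sum.inr j' ∈ Sᶜ → j = j' := by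
        intro j j' hj hj'
        by_contra hne
        have hadj := hcompl₂ _ (h2 ⟨_, hj⟩) ⟨Sum.inr j, hj⟩ ⟨Sum.inr j', hj'⟩
          (fun he => hne (Sum.inr_injective (congrArg Subtype.val he)))
        have : (KEg m (r + 1)).graph.Adj (Sum.inr j) (Sum.inr j') := by
          simpa [FGraph.induce] using hadj
        simpa [KEg] using this
      have hsome : ∃ j, Sum.inr j ∈ Sᶜ := by
        by_contra hno2
        push_neg at hno2
        have hmem : ∀ j : Fin (r + 1), Sum.inr j ∈ S := by
          intro j
          by_contra hj
          exact hno2 j hj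
        have hsub : r + 1 ≤ Fintype.card ↥S :=
          le_card_of_fin_inj _ (r + 1) (fun j => Sum.inr j) (fun j => hmem j)
            (fun a b hab => Sum.inr_injective hab)
        have hSne : S.Nonempty := ⟨Sum.inr ⟨0, by omega⟩, hmem _⟩
        have hle : Fintype.card ↥S ≤ r := cardLE _ (hsize₁ _ (h1 hSne))
        omega
      obtain ⟨jstar, hjstar⟩ := hsome
      have halli : ∀ i : Fin m, Sum.inl i ∈ Sᶜ := by
        intro i
        by_contra hi
        have hiS : Sum.inl i ∈ S := not_not.mp hi
        have hj2 : ∃ j, Sum.inr j ∈ S := by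
          obtain ⟨j1, hj1ne⟩ := Fintype.exists_ne_of_one_lt_card
            (by simpa using (by omega : 1 < r + 1)) jstar
          by_cases hj1 : Sum.inr j1 ∈ Sᶜ
          · exact absurd (hone _ _ hj1 hjstar) hj1ne
          · exact ⟨j1, not_not.mp hj1⟩
        obtain ⟨j, hj⟩ := hj2
        refine hedgeless₁ _ (h1 ⟨_, hiS⟩) ⟨Sum.inl i, hiS⟩ ⟨Sum.inr j, hj⟩ ?_
        simp [FGraph.induce, KEg]
      have hk1 : g ≤ Fintype.card ↥(Sᶜ) := by
        refine cardGE _ (le_card_of_fin_inj (Sᶜ) g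
          (fun t => if ht : (t : ℕ) < m then Sum.inl ⟨t, ht⟩ else Sum.inr jstar) ?_ ?_)
        · intro t
          by_cases ht : (t : ℕ) < m
          · simp only [dif_pos ht]; exact halli _
          · simp only [dif_neg ht]; exact hjstar
        · intro t t' heq
          by_cases ht : (t : ℕ) < m <;> by_cases ht' : (t' : ℕ) < m
          · simp only [dif_pos ht, dif_pos ht'] at heq
            have := Sum.inl_injective heq
            exact Fin.ext (by simpa [Fin.ext_iff] using this)
          · simp only [dif_pos ht, dif_neg ht'] at heq
            exact nomatch heq
          · simp only [dif_neg ht, dif_pos ht'] at heq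
            exact nomatch heq
          · have h1t := t.isLt
            have h2t := t'.isLt
            exact Fin.ext (by omega)
      have hk2 : Fintype.card ↥(Sᶜ) ≤ g := by
        refine cardLE _ (card_le_of_inj_to_fin (Sᶜ) g
          (Sum.elim (fun i => ⟨i.1, by omega⟩) (fun _ => ⟨m, by omega⟩)) ?_)
        rintro (a | b) hx (a' | b') hy heq
        · simp only [Sum.elim_inl, Fin.mk.injEq] at heq
          exact congrArg Sum.inl (Fin.ext heq)
        · simp only [Sum.elim_inl, Sum.elim_inr, Fin.mk.injEq] at heq
          exact absurd heq (by omega)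
        · simp only [Sum.elim_inl, Sum.elim_inr, Fin.mk.injEq] at heq
          exact absurd heq.symm (by omega)
        · exact congrArg Sum.inr (hone _ _ hx hy)
      have hcS : Fintype.card ↥(Sᶜ) = g := le_antisymm hk2 hk1
      refine ⟨_, h2 ⟨_, hjstar⟩, induce_top_of ?_, cardEQ _ hcS⟩
      rintro (a | b) hx (a' | b') hy hxy
      · have haa : a ≠ a' := fun he => hxy (congrArg Sum.inl he)
        simpa [KEg] using haa
      · simp [KEg]
      · simp [KEg]
      · exact absurd (congrArg Sum.inr (hone _ _ hx hy)) hxy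
  -- Step i : conclude
  constructor
  · funext G
    refine propext ⟨fun hG => ?_, fun hG => ?_⟩
    · refine ⟨hQ₁.vertexNonempty _ hG, ?_, Nat.cast_le.mpr (hsize₁ _ hG)⟩
      ext u v
      rw [SimpleGraph.bot_adj, iff_false]
      exact hedgeless₁ _ hG u v
    · obtain ⟨hne, hbot, hcard⟩ := hG
      have h1n : 0 < Fintype.card G.V := Fintype.card_pos_iff.mpr hne
      have hnr : Fintype.card G.V ≤ r := by exact_mod_cast hcard
      obtain ⟨G', hG', hb', hc'⟩ := hEn (Fintype.card G.V) (by omega) hnr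
      exact mem_of_bot_card hQ₁ hG' hb' G hbot hc'
  · funext G
    refine propext ⟨fun hG => ?_, fun hG => ?_⟩
    · refine ⟨hQ₂.vertexNonempty _ hG, ?_, Nat.cast_le.mpr (hsize₂ _ hG)⟩
      ext u v
      rw [SimpleGraph.top_adj]
      exact ⟨fun hadj => hadj.ne, fun hne => hcompl₂ _ hG u v hne⟩
    · obtain ⟨hne, htop, hcard⟩ := hG
      have h1n : 0 < Fintype.card G.V := Fintype.card_pos_iff.mpr hne
      have hns : Fintype.card G.V ≤ s := by exact_mod_cast hcard
      obtain ⟨G', hG', hb', hc'⟩ := hKn (Fintype.card G.V) (by omega) hns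
      exact mem_of_top_card hQ₂ hG' hb' G htop hc'

end AuxE
/-- for finite `r, s ≥ 2`, if `O(r) ∘ K(s) = Q₁ ∘ Q₂` for graph
properties `Q₁, Q₂`, then `{Q₁, Q₂} = {O(r), K(s)}` as an unordered pair. -/
theorem statement_5 (r s : ℕ) (hr : 2 ≤ r) (hs : 2 ≤ s)
    (Q₁ Q₂ : GProp) (hQ₁ : IsGProp Q₁) (hQ₂ : IsGProp Q₂)
    (h : GProp.prod (Oprop (r : ℕ∞)) (Kprop (s : ℕ∞)) = GProp.prod Q₁ Q₂) :
    (Q₁ = Oprop (r : ℕ∞) ∧ Q₂ = Kprop (s : ℕ∞)) ∨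
    (Q₁ = Kprop (s : ℕ∞) ∧ Q₂ = Oprop (r : ℕ∞)) := by
  have hX := memP_E (r := r) (s := s) (by omega) (by omega) (r + 1) (by omega) le_rfl
  have hX2 : GProp.prod Q₁ Q₂ (Eg (r + 1)) := by
    rw [← h]
    exact hX
  obtain ⟨hne, S, h1, h2⟩ := hX2
  have hcard : Fintype.card ↥S + Fintype.card ↥(Sᶜ) = r + 1 := by
    have hq := card_set_add_card_compl S
    simpa using hq
  have hstart : (∃ G, Q₁ G ∧ ∃ u v : G.V, u ≠ v ∧ ¬G.graph.Adj u v) ∨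
      (∃ G, Q₂ G ∧ ∃ u v : G.V, u ≠ v ∧ ¬G.graph.Adj u v) := by
    rcases Nat.lt_or_ge (Fintype.card ↥S) 2 with hS2 | hS2
    · right
      have hc2 : 2 ≤ Fintype.card ↥(Sᶜ) := by omega
      have hScne : (Sᶜ).Nonempty :=
        Set.nonempty_coe_sort.mp ((Fintype.card_pos_iff (α := ↥(Sᶜ))).mp (by omega))
      obtain ⟨x, hx, y, hy, hxy⟩ := exists_pair_set (S := Sᶜ) (cardGE _ hc2)
      refine ⟨_, h2 hScne, ⟨x, hx⟩, ⟨y, hy⟩, fun he => hxy (congrArg Subtype.val he), ?_⟩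
      intro hadj
      have hadj' : (Eg (r + 1)).graph.Adj x y := by simpa [FGraph.induce] using hadj
      simpa [Eg] using hadj'
    · left
      have hSne : S.Nonempty :=
        Set.nonempty_coe_sort.mp ((Fintype.card_pos_iff (α := ↥S)).mp (by omega))
      obtain ⟨x, hx, y, hy, hxy⟩ := exists_pair_set (S := S) (cardGE _ hS2)
      refine ⟨_, h1 hSne, ⟨x, hx⟩, ⟨y, hy⟩, fun he => hxy (congrArg Subtype.val he), ?_⟩
      intro hadj
      have hadj' : (Eg (r + 1)).graph.Adj x y := by simpa [FGraph.induce] using hadj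
      simpa [Eg] using hadj'
  rcases hstart with hst | hst
  · exact Or.inl (mainLemma r s hr hs Q₁ Q₂ hQ₁ hQ₂ h hst)
  · have h' : GProp.prod (Oprop (r : ℕ∞)) (Kprop (s : ℕ∞)) = GProp.prod Q₂ Q₁ :=
      h.trans (prod_comm' Q₁ Q₂)
    obtain ⟨hq2, hq1⟩ := mainLemma r s hr hs Q₂ Q₁ hQ₂ hQ₁ h' hst
    exact Or.inr ⟨hq1, hq2⟩
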